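/- arXiv:quant-ph/9810091 — 2 statements merged into one kernel-verified Lean document; each statement's English description precedes it below -/
import Mathlib

section
/- Let S = {|α_i⟩⊗|β_i⟩} be a UPB in H_A ⊗ H_B, H the witness of Theorem (H = Σ_i |α_i⟩⟨α_i|⊗|β_i⟩⟨β_i| − dε|Ψ⟩⟨Ψ| with ⟨Ψ|ρ|Ψ⟩ > 0), and define S : B(H_A) → B(H_B) by S(|i⟩⟨j|) = ⟨i|H|j⟩ (the (i,j) block of H). Then the positive linear map S is not completely positive and is indecomposable: S cannot be written as S₁ + S₂ ∘ T with S₁, S₂ completely positive. -/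
open scoped BigOperators ComplexConjugate ComplexOrder

noncomputable section

def inC {ι : Type*} [Fintype ι] (x y : ι → ℂ) : ℂ := ∑ i, conj (x i) * y i

def prodVec {ι κ : Type*} (a : ι → ℂ) (b : κ → ℂ) : ι × κ → ℂ := fun p => a p.1 * b p.2

def outer {ι : Type*} (x : ι → ℂ) : Matrix ι ι ℂ := Matrix.vecMulVec x (star x)

def ONFam {σ ι : Type*} [DecidableEq σ] [Fintype ι] (f : σ → ι → ℂ) : Prop :=
  ∀ i j, inC (f i) (f j) = if i = j then 1 else 0

def IsUPB {σ ιA ιB : Type*} [DecidableEq σ] [Fintype σ] [Fintype ιA] [Fintype ιB]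
    (α : σ → ιA → ℂ) (β : σ → ιB → ℂ) : Prop :=
  ONFam (fun i => prodVec (α i) (β i)) ∧
  Submodule.span ℂ (Set.range fun i => prodVec (α i) (β i)) ≠ ⊤ ∧
  ∀ (a : ιA → ℂ) (b : ιB → ℂ), a ≠ 0 → b ≠ 0 →
    (∀ i, inC (prodVec (α i) (β i)) (prodVec a b) = 0) → False

def MaxEnt {m n : ℕ} (Ψ : Fin m × Fin n → ℂ) : Prop :=
  ∃ (a : Fin (min m n) → Fin m → ℂ) (b : Fin (min m n) → Fin n → ℂ),
    ONFam a ∧ ONFam b ∧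
    Ψ = fun p => ((Real.sqrt (min m n) : ℝ) : ℂ)⁻¹ * (∑ i, prodVec (a i) (b i)) p

def blockMap {ι κ κ' : Type*}
    (S : Matrix κ κ ℂ →ₗ[ℂ] Matrix κ' κ' ℂ)
    (ρ : Matrix (ι × κ) (ι × κ) ℂ) : Matrix (ι × κ') (ι × κ') ℂ :=
  Matrix.of fun p q => S (Matrix.of fun b b' => ρ (p.1, b) (q.1, b')) p.2 q.2

def IsCP {κ κ' : Type*} [Fintype κ] [Fintype κ'] [DecidableEq κ] [DecidableEq κ']
    (S : Matrix κ κ ℂ →ₗ[ℂ] Matrix κ' κ' ℂ) : Prop :=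
  ∀ (k : ℕ) (ρ : Matrix (Fin k × κ) (Fin k × κ) ℂ),
    ρ.PosSemidef → (blockMap S ρ).PosSemidef

def Tmap (κ : Type*) : Matrix κ κ ℂ →ₗ[ℂ] Matrix κ κ ℂ where
  toFun := Matrix.transpose
  map_add' := Matrix.transpose_add
  map_smul' := Matrix.transpose_smul


open Matrix

section helpers
variable {ι κ : Type*} [Fintype ι] [Fintype κ]

private def eE {ι : Type*} [Fintype ι] (x : ι → ℂ) : EuclideanSpace ℂ ι :=
  (WithLp.equiv 2 (ι → ℂ)).symm x

private lemma inC_eq_inner (x y : ι → ℂ) : inC x y = @inner ℂ _ _ (eE x) (eE y) := by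
  simp [inC, eE, PiLp.inner_apply, RCLike.inner_apply]
  exact Finset.sum_congr rfl fun _ _ => mul_comm _ _

private lemma inC_self (x : ι → ℂ) : inC x x = ((∑ i, ‖x i‖^2 : ℝ) : ℂ) := by
  simp [inC, Complex.conj_mul', Complex.ofReal_sum]

private lemma conj_mul_self_eq (z : ℂ) : conj z * z = ((‖z‖^2 : ℝ) : ℂ) := by
  rw [Complex.conj_mul']; push_cast; ring

private lemma bessel {σ : Type*} [Fintype σ] [DecidableEq σ] {f : σ → ι → ℂ}
    (hf : ONFam f) (x : ι → ℂ) :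
    ∑ i, ‖inC (f i) x‖^2 ≤ ∑ i, ‖x i‖^2 := by
  have horth : Orthonormal ℂ (fun i => eE (f i)) := by
    rw [orthonormal_iff_ite]
    intro i j
    rw [← inC_eq_inner]
    exact hf i j
  have h := horth.sum_inner_products_le (s := Finset.univ) (eE x)
  have hn : ‖eE x‖^2 = (inC x x).re := by
    rw [inC_eq_inner, ← @inner_self_eq_norm_sq ℂ]; rfl
  rw [hn, inC_self, Complex.ofReal_re] at h
  refine le_trans (le_of_eq ?_) h
  exact Finset.sum_congr rfl fun i _ => by rw [inC_eq_inner]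

private lemma conjTranspose_sum' {s : ℕ} (A : Fin s → Matrix ι ι ℂ) :
    (∑ i, A i)ᴴ = ∑ i, (A i)ᴴ := by
  ext p q
  simp [conjTranspose_apply, Matrix.sum_apply, map_sum]

private lemma outer_herm (y : ι → ℂ) : (outer y)ᴴ = outer y := by
  ext p q
  simp [outer, conjTranspose_apply, vecMulVec_apply, mul_comm]

private lemma inC_prodVec (a c : ι → ℂ) (b d : κ → ℂ) :
    inC (prodVec a b) (prodVec c d) = inC a c * inC b d := by
  unfold inC prodVec
  rw [Fintype.sum_prod_type, Finset.sum_mul_sum]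
  refine Finset.sum_congr rfl fun i _ => Finset.sum_congr rfl fun j _ => ?_
  simp only [_root_.map_mul]; ring

private lemma conj_inC (x y : ι → ℂ) : conj (inC x y) = inC y x := by
  simp [inC, map_sum, mul_comm]

private lemma sum_mulVec' {s : ℕ} (A : Fin s → Matrix ι ι ℂ) (x : ι → ℂ) :
    (∑ i, A i) *ᵥ x = ∑ i, (A i *ᵥ x) := by
  funext p
  simp only [Matrix.mulVec, dotProduct, Matrix.sum_apply, Finset.sum_apply, Finset.sum_mul]
  exact Finset.sum_comm

private lemma dot_sum' {s : ℕ} (u : ι → ℂ) (v : Fin s → ι → ℂ) :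
    u ⬝ᵥ (∑ i, v i) = ∑ i, u ⬝ᵥ v i := by
  simp only [dotProduct, Finset.sum_apply, Finset.mul_sum]
  exact Finset.sum_comm

private lemma mulVec_outer (x y : ι → ℂ) : (outer y).mulVec x = fun p => y p * inC y x := by
  funext p
  simp only [outer, Matrix.mulVec, dotProduct, vecMulVec_apply, inC, Finset.mul_sum,
    Pi.star_apply, RCLike.star_def]
  exact Finset.sum_congr rfl fun q _ => by ring

private lemma quad_outer (x y : ι → ℂ) :
    star x ⬝ᵥ (outer y).mulVec x = conj (inC y x) * inC y x := by
  rw [mulVec_outer, ← conj_inC x y]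
  simp only [dotProduct, Pi.star_apply, RCLike.star_def, inC, map_sum, _root_.map_mul,
    Complex.conj_conj, Finset.sum_mul]
  exact Finset.sum_congr rfl fun q _ => by ring

private lemma quad_form_formula {s : ℕ} (g : Fin s → ι → ℂ) (c : ℂ) (x : ι → ℂ) [DecidableEq ι] :
    star x ⬝ᵥ ((c • ((1:Matrix ι ι ℂ) - ∑ i, outer (g i))).mulVec x)
    = c * (inC x x - ∑ i, conj (inC (g i) x) * inC (g i) x) := by
  rw [Matrix.smul_mulVec, dotProduct_smul, Matrix.sub_mulVec, dotProduct_sub,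
    Matrix.one_mulVec, sum_mulVec', dot_sum']
  have h1 : star x ⬝ᵥ x = inC x x := by simp [dotProduct, inC]
  have h2 : ∑ i, star x ⬝ᵥ (outer (g i) *ᵥ x) = ∑ i, conj (inC (g i) x) * inC (g i) x :=
    Finset.sum_congr rfl fun i _ => quad_outer x (g i)
  rw [h1, h2, smul_eq_mul]

private lemma psd_complement {s : ℕ} [DecidableEq ι] (g : Fin s → ι → ℂ)
    (hg : ONFam g) (c : ℝ) (hc : 0 ≤ c) :
    (((c:ℂ)) • ((1:Matrix ι ι ℂ) - ∑ i, outer (g i))).PosSemidef := by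
  refine Matrix.posSemidef_iff_dotProduct_mulVec.mpr ⟨?_, ?_⟩
  · show _ᴴ = _
    rw [conjTranspose_smul, conjTranspose_sub, conjTranspose_one, conjTranspose_sum']
    congr 1
    · simp [Complex.star_def, Complex.conj_ofReal]
    · congr 1
      exact Finset.sum_congr rfl fun i _ => outer_herm (g i)
  · intro x
    rw [quad_form_formula, inC_self]
    have h2 : ∑ i, conj (inC (g i) x) * inC (g i) x = ((∑ i, ‖inC (g i) x‖^2 : ℝ) : ℂ) := by
      rw [Complex.ofReal_sum]
      exact Finset.sum_congr rfl fun i _ => conj_mul_self_eq _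
    rw [h2, ← Complex.ofReal_sub, ← Complex.ofReal_mul]
    rw [Complex.zero_le_real]
    exact mul_nonneg hc (sub_nonneg.2 (bessel hg x))

private lemma quad_expand {γ : Type*} [Fintype γ] (A : Matrix γ γ ℂ) (x : γ → ℂ) :
    star x ⬝ᵥ A.mulVec x = ∑ p, ∑ q, conj (x p) * (A p q * x q) := by
  simp [dotProduct, Matrix.mulVec, Finset.mul_sum]

private lemma inC_scale_left (z : ℂ) (a y : ι → ℂ) :
    inC (fun i => z * a i) y = conj z * inC a y := by
  simp [inC, Finset.mul_sum, mul_assoc]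

private lemma norm_inC_conj (x y : ι → ℂ) : ‖inC x y‖ = ‖inC y x‖ := by
  rw [← conj_inC y x, RCLike.norm_conj]

private lemma inC_star_star (u v : ι → ℂ) :
    inC (star u) (star v) = conj (inC u v) := by
  simp [inC, map_sum, _root_.map_mul, mul_comm]

end helpers

section mainhelpers
variable {m n s : ℕ}

private lemma inC_maxent {Ψ : Fin m × Fin n → ℂ}
    (u : Fin (min m n) → Fin m → ℂ) (v : Fin (min m n) → Fin n → ℂ)
    (hΨeq : Ψ = fun p => ((Real.sqrt (min m n) : ℝ) : ℂ)⁻¹ * (∑ i, prodVec (u i) (v i)) p)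
    (y : Fin m × Fin n → ℂ) :
    inC Ψ y = ((Real.sqrt (min m n) : ℝ) : ℂ)⁻¹ * ∑ i, inC (prodVec (u i) (v i)) y := by
  subst hΨeq
  unfold inC
  rw [Finset.mul_sum]
  have step : ∀ p : Fin m × Fin n,
      conj ((fun p => ((Real.sqrt (min m n) : ℝ) : ℂ)⁻¹ * (∑ i, prodVec (u i) (v i)) p) p) * y p
      = ∑ i, ((Real.sqrt (min m n) : ℝ) : ℂ)⁻¹ * (conj (prodVec (u i) (v i) p) * y p) := by
    intro p
    simp only [_root_.map_mul, map_inv₀, Complex.conj_ofReal, Finset.sum_apply, map_sum,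
      Finset.sum_mul, Finset.mul_sum]
    exact Finset.sum_congr rfl fun i _ => by ring
  rw [Finset.sum_congr rfl fun p _ => step p]
  rw [Finset.sum_comm]
  exact Finset.sum_congr rfl fun i _ => by rw [Finset.mul_sum]

private lemma maxent_bound (hm : 0 < m) (hn : 0 < n) {Ψ : Fin m × Fin n → ℂ}
    (hΨ : MaxEnt Ψ) (a : Fin m → ℂ) (c : Fin n → ℂ) :
    ‖inC Ψ (prodVec a c)‖^2 ≤ ((min m n : ℝ))⁻¹ * ((∑ i, ‖a i‖^2) * (∑ j, ‖c j‖^2)) := by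
  obtain ⟨u, v, hu, hv, hΨeq⟩ := hΨ
  rw [inC_maxent u v hΨeq]
  have hmin : (0:ℝ) < (min m n : ℝ) := by
    have : 0 < min m n := lt_min hm hn
    exact_mod_cast this
  have hr : ‖((Real.sqrt (min m n) : ℝ) : ℂ)⁻¹‖^2 = ((min m n : ℝ))⁻¹ := by
    rw [norm_inv, Complex.norm_real, Real.norm_eq_abs, abs_of_nonneg (Real.sqrt_nonneg _)]
    rw [← Real.sqrt_inv]
    exact Real.sq_sqrt (inv_nonneg.2 hmin.le)
  rw [norm_mul, mul_pow, hr]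
  refine mul_le_mul_of_nonneg_left ?_ (inv_nonneg.2 hmin.le)
  have h1 : ∀ i, inC (prodVec (u i) (v i)) (prodVec a c) = inC (u i) a * inC (v i) c :=
    fun i => inC_prodVec _ _ _ _
  rw [Finset.sum_congr rfl fun i _ => h1 i]
  have h2 : ‖∑ i, inC (u i) a * inC (v i) c‖ ≤ ∑ i, ‖inC (u i) a‖ * ‖inC (v i) c‖ := by
    refine le_trans (norm_sum_le _ _) (le_of_eq ?_)
    exact Finset.sum_congr rfl fun i _ => norm_mul _ _
  have h3 : (∑ i, ‖inC (u i) a‖ * ‖inC (v i) c‖)^2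
      ≤ (∑ i, ‖inC (u i) a‖^2) * (∑ i, ‖inC (v i) c‖^2) :=
    Finset.sum_mul_sq_le_sq_mul_sq _ _ _
  have h4 : (∑ i, ‖inC (u i) a‖^2) * (∑ i, ‖inC (v i) c‖^2)
      ≤ (∑ i, ‖a i‖^2) * (∑ j, ‖c j‖^2) := by
    refine mul_le_mul (bessel hu a) (bessel hv c) ?_ ?_
    · exact Finset.sum_nonneg fun i _ => sq_nonneg _
    · exact Finset.sum_nonneg fun i _ => sq_nonneg _
  calc ‖∑ i, inC (u i) a * inC (v i) c‖^2
      ≤ (∑ i, ‖inC (u i) a‖ * ‖inC (v i) c‖)^2 := by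
        refine pow_le_pow_left₀ (norm_nonneg _) h2 2
    _ ≤ _ := le_trans h3 h4

private lemma eps_bound (α : Fin s → Fin m → ℂ) (β : Fin s → Fin n → ℂ) (ε : ℝ)
    (hεmin : ∀ (a : Fin m → ℂ) (b : Fin n → ℂ), inC a a = 1 → inC b b = 1 →
      ε ≤ ∑ i, ‖inC a (α i)‖ ^ 2 * ‖inC b (β i)‖ ^ 2)
    (a : Fin m → ℂ) (c : Fin n → ℂ) :
    ε * ((∑ i, ‖a i‖^2) * (∑ j, ‖c j‖^2)) ≤ ∑ i, ‖inC (α i) a‖^2 * ‖inC (β i) c‖^2 := by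
  set Na := ∑ i, ‖a i‖^2 with hNa
  set Nc := ∑ j, ‖c j‖^2 with hNc
  have hNa0 : 0 ≤ Na := Finset.sum_nonneg fun i _ => sq_nonneg _
  have hNc0 : 0 ≤ Nc := Finset.sum_nonneg fun i _ => sq_nonneg _
  have hRHS0 : 0 ≤ ∑ i, ‖inC (α i) a‖^2 * ‖inC (β i) c‖^2 :=
    Finset.sum_nonneg fun i _ => mul_nonneg (sq_nonneg _) (sq_nonneg _)
  rcases eq_or_lt_of_le hNa0 with h|hNapos
  · rw [← h]; simpa using hRHS0
  rcases eq_or_lt_of_le hNc0 with h|hNcpos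
  · rw [← h]; simpa using hRHS0
  set ta : ℝ := (Real.sqrt Na)⁻¹ with hta
  set tc : ℝ := (Real.sqrt Nc)⁻¹ with htc
  have hta2 : ta^2 = Na⁻¹ := by
    rw [hta, ← Real.sqrt_inv]; exact Real.sq_sqrt (inv_nonneg.2 hNa0)
  have htc2 : tc^2 = Nc⁻¹ := by
    rw [htc, ← Real.sqrt_inv]; exact Real.sq_sqrt (inv_nonneg.2 hNc0)
  set a' : Fin m → ℂ := fun i => ((ta:ℝ):ℂ) * a i with ha'
  set c' : Fin n → ℂ := fun j => ((tc:ℝ):ℂ) * c j with hc'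
  have hna' : inC a' a' = 1 := by
    rw [inC_self]
    have : ∀ i, ‖a' i‖^2 = ta^2 * ‖a i‖^2 := by
      intro i
      rw [ha']
      simp only [norm_mul, Complex.norm_real, mul_pow, Real.norm_eq_abs, sq_abs]
    rw [Finset.sum_congr rfl fun i _ => this i, ← Finset.mul_sum, hta2, ← hNa,
      inv_mul_cancel₀ (ne_of_gt hNapos)]
    norm_num
  have hnc' : inC c' c' = 1 := by
    rw [inC_self]
    have : ∀ i, ‖c' i‖^2 = tc^2 * ‖c i‖^2 := by
      intro i
      rw [hc']
      simp only [norm_mul, Complex.norm_real, mul_pow, Real.norm_eq_abs, sq_abs]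
    rw [Finset.sum_congr rfl fun i _ => this i, ← Finset.mul_sum, htc2, ← hNc,
      inv_mul_cancel₀ (ne_of_gt hNcpos)]
    norm_num
  have hkey := hεmin a' c' hna' hnc'
  have hterm : ∀ i, ‖inC a' (α i)‖^2 * ‖inC c' (β i)‖^2
      = (Na⁻¹ * Nc⁻¹) * (‖inC (α i) a‖^2 * ‖inC (β i) c‖^2) := by
    intro i
    have hta0 : (0:ℝ) ≤ ta := by rw [hta]; exact inv_nonneg.2 (Real.sqrt_nonneg _)
    have htc0 : (0:ℝ) ≤ tc := by rw [htc]; exact inv_nonneg.2 (Real.sqrt_nonneg _)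
    have h1 : ‖inC a' (α i)‖ = ta * ‖inC (α i) a‖ := by
      rw [ha', inC_scale_left, norm_mul, Complex.conj_ofReal, Complex.norm_real,
        Real.norm_eq_abs, abs_of_nonneg hta0, norm_inC_conj a]
    have h2 : ‖inC c' (β i)‖ = tc * ‖inC (β i) c‖ := by
      rw [hc', inC_scale_left, norm_mul, Complex.conj_ofReal, Complex.norm_real,
        Real.norm_eq_abs, abs_of_nonneg htc0, norm_inC_conj c]
    rw [h1, h2, mul_pow, mul_pow, hta2, htc2]
    ring
  rw [Finset.sum_congr rfl fun i _ => hterm i, ← Finset.mul_sum] at hkey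
  have := mul_le_mul_of_nonneg_left hkey (mul_nonneg hNa0 hNc0)
  calc ε * (Na * Nc) = (Na * Nc) * ε := by ring
    _ ≤ (Na * Nc) * (Na⁻¹ * Nc⁻¹ * ∑ i, ‖inC (α i) a‖^2 * ‖inC (β i) c‖^2) := this
    _ = (Na * Na⁻¹) * (Nc * Nc⁻¹) * ∑ i, ‖inC (α i) a‖^2 * ‖inC (β i) c‖^2 := by ring
    _ = ∑ i, ‖inC (α i) a‖^2 * ‖inC (β i) c‖^2 := by
        rw [mul_inv_cancel₀ (ne_of_gt hNapos), mul_inv_cancel₀ (ne_of_gt hNcpos)]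
        ring

variable {α : Fin s → Fin m → ℂ} {β : Fin s → Fin n → ℂ}
  {ε : ℝ} {Ψ : Fin m × Fin n → ℂ}
  {ρ H : Matrix (Fin m × Fin n) (Fin m × Fin n) ℂ}
  {S : Matrix (Fin m) (Fin m) ℂ →ₗ[ℂ] Matrix (Fin n) (Fin n) ℂ}

private lemma S_apply
    (hS : ∀ i j : Fin m, S (Matrix.single i j 1) = Matrix.of fun b b' => H (i, b) (j, b'))
    (M : Matrix (Fin m) (Fin m) ℂ) (b b' : Fin n) :
    S M b b' = ∑ i, ∑ j, M i j * H (i, b) (j, b') := by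
  conv_lhs => rw [Matrix.matrix_eq_sum_single M]
  rw [map_sum, Matrix.sum_apply]
  refine Finset.sum_congr rfl fun i _ => ?_
  rw [map_sum, Matrix.sum_apply]
  refine Finset.sum_congr rfl fun j _ => ?_
  have h1 : Matrix.single i j (M i j) = M i j • Matrix.single i j 1 := by
    rw [Matrix.smul_single, smul_eq_mul, mul_one]
  rw [h1, _root_.map_smul, Matrix.smul_apply, hS, smul_eq_mul]
  rfl

private lemma quad_S_outer
    (hS : ∀ i j : Fin m, S (Matrix.single i j 1) = Matrix.of fun b b' => H (i, b) (j, b'))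
    (w : Fin m → ℂ) (c : Fin n → ℂ) :
    star c ⬝ᵥ (S (outer w)).mulVec c
    = star (prodVec (star w) c) ⬝ᵥ H.mulVec (prodVec (star w) c) := by
  rw [quad_expand, quad_expand]
  rw [Fintype.sum_prod_type]
  simp only [S_apply hS]
  simp only [Finset.sum_mul, Finset.mul_sum]
  rw [show ∀ f : Fin n → Fin n → Fin m → Fin m → ℂ, (∑ b, ∑ b', ∑ i, ∑ j, f b b' i j) = ∑ i, ∑ b, ∑ b', ∑ j, f b b' i j from fun f => by
      rw [show (∑ b, ∑ b', ∑ i, ∑ j, f b b' i j) = ∑ b, ∑ i, ∑ b', ∑ j, f b b' i j from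
        Finset.sum_congr rfl fun b _ => Finset.sum_comm]
      exact Finset.sum_comm]
  refine Finset.sum_congr rfl fun i _ => Finset.sum_congr rfl fun b _ => ?_
  rw [Fintype.sum_prod_type]
  rw [Finset.sum_comm]
  refine Finset.sum_congr rfl fun b' _ => Finset.sum_congr rfl fun j _ => ?_
  simp only [outer, Matrix.vecMulVec_apply, prodVec, Pi.star_apply, RCLike.star_def, _root_.map_mul,
    Complex.conj_conj]
  ring

private lemma quad_H (hH : H = (∑ i, outer (prodVec (α i) (β i))) -
      (((min m n : ℝ) * ε : ℝ) : ℂ) • outer Ψ) (x : Fin m × Fin n → ℂ) :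
    star x ⬝ᵥ H.mulVec x
    = (∑ i, conj (inC (prodVec (α i) (β i)) x) * inC (prodVec (α i) (β i)) x)
      - (((min m n : ℝ) * ε : ℝ) : ℂ) * (conj (inC Ψ x) * inC Ψ x) := by
  rw [hH, Matrix.sub_mulVec, dotProduct_sub, sum_mulVec', dot_sum',
    Matrix.smul_mulVec, dotProduct_smul, quad_outer, smul_eq_mul]
  congr 1
  exact Finset.sum_congr rfl fun i _ => quad_outer x _

private lemma quad_H_prod_nonneg (hm : 0 < m) (hn : 0 < n) (hε : 0 < ε)
    (hεmin : ∀ (a : Fin m → ℂ) (b : Fin n → ℂ), inC a a = 1 → inC b b = 1 →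
      ε ≤ ∑ i, ‖inC a (α i)‖ ^ 2 * ‖inC b (β i)‖ ^ 2)
    (hΨ : MaxEnt Ψ)
    (hH : H = (∑ i, outer (prodVec (α i) (β i))) -
      (((min m n : ℝ) * ε : ℝ) : ℂ) • outer Ψ)
    (a : Fin m → ℂ) (c : Fin n → ℂ) :
    0 ≤ star (prodVec a c) ⬝ᵥ H.mulVec (prodVec a c) := by
  rw [quad_H hH]
  have h1 : ∀ i : Fin s, conj (inC (prodVec (α i) (β i)) (prodVec a c))
      * inC (prodVec (α i) (β i)) (prodVec a c)
      = ((‖inC (α i) a‖^2 * ‖inC (β i) c‖^2 : ℝ) : ℂ) := by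
    intro i
    rw [conj_mul_self_eq, inC_prodVec, norm_mul, mul_pow, Complex.ofReal_mul]
  rw [Finset.sum_congr rfl fun i _ => h1 i, conj_mul_self_eq, ← Complex.ofReal_sum,
    ← Complex.ofReal_mul, ← Complex.ofReal_sub, Complex.zero_le_real]
  have hmin : (0:ℝ) < (min m n : ℝ) := by
    have : 0 < min m n := lt_min hm hn
    exact_mod_cast this
  have step1 : (min m n : ℝ) * ε * ‖inC Ψ (prodVec a c)‖^2
      ≤ (min m n : ℝ) * ε * (((min m n : ℝ))⁻¹ * ((∑ i, ‖a i‖^2) * (∑ j, ‖c j‖^2))) :=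
    mul_le_mul_of_nonneg_left (maxent_bound hm hn hΨ a c)
      (mul_nonneg hmin.le hε.le)
  have step2 : (min m n : ℝ) * ε * (((min m n : ℝ))⁻¹ * ((∑ i, ‖a i‖^2) * (∑ j, ‖c j‖^2)))
      = ε * ((∑ i, ‖a i‖^2) * (∑ j, ‖c j‖^2)) := by
    field_simp
  linarith [le_trans (le_trans step1 (le_of_eq step2)) (eps_bound α β ε hεmin a c)]

private lemma herm_H (hH : H = (∑ i, outer (prodVec (α i) (β i))) -
      (((min m n : ℝ) * ε : ℝ) : ℂ) • outer Ψ) (p q : Fin m × Fin n) :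
    conj (H p q) = H q p := by
  rw [hH]
  simp only [Matrix.sub_apply, Matrix.smul_apply, Matrix.sum_apply, outer,
    Matrix.vecMulVec_apply, Pi.star_apply, RCLike.star_def, map_sum, _root_.map_mul, map_sub,
    Complex.conj_conj, Complex.conj_ofReal, smul_eq_mul]
  congr 1
  · exact Finset.sum_congr rfl fun i _ => by ring
  · ring

private lemma posdef_part1 (hm : 0 < m) (hn : 0 < n) (hε : 0 < ε)
    (hεmin : ∀ (a : Fin m → ℂ) (b : Fin n → ℂ), inC a a = 1 → inC b b = 1 →
      ε ≤ ∑ i, ‖inC a (α i)‖ ^ 2 * ‖inC b (β i)‖ ^ 2)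
    (hΨ : MaxEnt Ψ)
    (hH : H = (∑ i, outer (prodVec (α i) (β i))) -
      (((min m n : ℝ) * ε : ℝ) : ℂ) • outer Ψ)
    (hS : ∀ i j : Fin m, S (Matrix.single i j 1) = Matrix.of fun b b' => H (i, b) (j, b'))
    (M : Matrix (Fin m) (Fin m) ℂ) (hM : M.PosSemidef) : (S M).PosSemidef := by
  obtain ⟨B, hB⟩ : ∃ B : Matrix (Fin m) (Fin m) ℂ, M = Bᴴ * B := by
    open scoped MatrixOrder in exact CStarAlgebra.nonneg_iff_eq_star_mul_self.mp hM.nonneg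
  have hMdec : M = ∑ k, outer (star (B k)) := by
    rw [hB]
    ext i j
    simp [Matrix.mul_apply, Matrix.conjTranspose_apply, Matrix.sum_apply, outer,
      Matrix.vecMulVec_apply]
  refine Matrix.posSemidef_iff_dotProduct_mulVec.mpr ⟨?_, ?_⟩
  · have hermM : ∀ i j, conj (M i j) = M j i := fun i j => congrFun (congrFun hM.1 j) i ▸ by
      rw [← hM.1]; simp [Matrix.conjTranspose_apply]
    ext b b'
    rw [Matrix.conjTranspose_apply, S_apply hS, S_apply hS, RCLike.star_def, map_sum,
      Finset.sum_comm]
    refine Finset.sum_congr rfl fun i _ => ?_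
    rw [map_sum]
    refine Finset.sum_congr rfl fun j _ => ?_
    rw [_root_.map_mul, herm_H hH, hermM]
  · intro x
    rw [hMdec, map_sum, sum_mulVec', dot_sum']
    refine Finset.sum_nonneg fun k _ => ?_
    have hqso := quad_S_outer hS (star (B k)) x
    rw [star_star] at hqso
    rw [hqso]
    exact quad_H_prod_nonneg hm hn hε hεmin hΨ hH _ _

private lemma onfam_g (hON : ONFam (fun i => prodVec (α i) (β i))) :
    ONFam (fun t => prodVec (star (β t)) (star (α t))) := by
  intro i j
  have h := hON i j
  rw [inC_prodVec] at h ⊢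
  rw [inC_star_star, inC_star_star, ← _root_.map_mul, mul_comm (inC (β i) (β j)), h]
  split <;> simp

private lemma onfam_h (hON : ONFam (fun i => prodVec (α i) (β i))) :
    ONFam (fun t => prodVec (star (β t)) (α t)) := by
  intro i j
  have h := hON i j
  rw [inC_prodVec] at h ⊢
  rw [inC_star_star]
  by_cases hij : i = j
  · subst hij
    simp only [if_pos rfl] at h ⊢
    rw [inC_self (β i), Complex.conj_ofReal, mul_comm]
    rw [inC_self (β i)] at h
    exact h
  · simp only [if_neg hij] at h ⊢
    rcases mul_eq_zero.mp h with h0 | h0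
    · rw [h0, mul_zero]
    · rw [h0, map_zero, zero_mul]

private lemma scal_eq : ((m * n - s : ℕ) : ℂ)⁻¹ = ((((m * n - s : ℕ) : ℝ)⁻¹ : ℝ) : ℂ) := by
  push_cast
  ring

private lemma sigma_eq (α : Fin s → Fin m → ℂ) (β : Fin s → Fin n → ℂ)
    (ρ : Matrix (Fin m × Fin n) (Fin m × Fin n) ℂ)
    (hρ : ρ = ((m * n - s : ℕ) : ℂ)⁻¹ • (1 - ∑ i, outer (prodVec (α i) (β i)))) :
    (Matrix.of fun (p q : Fin n × Fin m) => conj (ρ (p.2, p.1) (q.2, q.1)))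
    = ((((m * n - s : ℕ) : ℝ)⁻¹ : ℝ) : ℂ) •
      ((1 : Matrix (Fin n × Fin m) (Fin n × Fin m) ℂ)
        - ∑ t, outer (prodVec (star (β t)) (star (α t)))) := by
  subst hρ
  ext p q
  obtain ⟨i, k⟩ := p
  obtain ⟨j, l⟩ := q
  simp only [Matrix.of_apply, Matrix.smul_apply, Matrix.sub_apply, Matrix.sum_apply,
    Matrix.one_apply, outer, Matrix.vecMulVec_apply, prodVec, Pi.star_apply, RCLike.star_def,
    map_sub, _root_.map_mul, map_sum, map_inv₀, Complex.conj_natCast, smul_eq_mul,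
    Complex.conj_conj, apply_ite, _root_.map_one, map_zero]
  rw [← scal_eq]
  congr 1
  · congr 1
    · simp [Prod.ext_iff, and_comm, eq_comm]
    · exact Finset.sum_congr rfl fun t _ => by ring

private lemma tau_eq (α : Fin s → Fin m → ℂ) (β : Fin s → Fin n → ℂ)
    (ρ : Matrix (Fin m × Fin n) (Fin m × Fin n) ℂ)
    (hρ : ρ = ((m * n - s : ℕ) : ℂ)⁻¹ • (1 - ∑ i, outer (prodVec (α i) (β i)))) :
    (Matrix.of fun (p q : Fin n × Fin m) => conj (ρ (q.2, p.1) (p.2, q.1)))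
    = ((((m * n - s : ℕ) : ℝ)⁻¹ : ℝ) : ℂ) •
      ((1 : Matrix (Fin n × Fin m) (Fin n × Fin m) ℂ)
        - ∑ t, outer (prodVec (star (β t)) (α t))) := by
  subst hρ
  ext p q
  obtain ⟨i, k⟩ := p
  obtain ⟨j, l⟩ := q
  simp only [Matrix.of_apply, Matrix.smul_apply, Matrix.sub_apply, Matrix.sum_apply,
    Matrix.one_apply, outer, Matrix.vecMulVec_apply, prodVec, Pi.star_apply, RCLike.star_def,
    map_sub, _root_.map_mul, map_sum, map_inv₀, Complex.conj_natCast, smul_eq_mul,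
    Complex.conj_conj, apply_ite, _root_.map_one, map_zero]
  rw [← scal_eq]
  congr 1
  · congr 1
    · simp [Prod.ext_iff, and_comm, eq_comm]
    · exact Finset.sum_congr rfl fun t _ => by ring

private lemma herm_rho
    (hρ : ρ = ((m * n - s : ℕ) : ℂ)⁻¹ • (1 - ∑ i, outer (prodVec (α i) (β i))))
    (p q : Fin m × Fin n) : conj (ρ p q) = ρ q p := by
  subst hρ
  simp only [Matrix.smul_apply, Matrix.sub_apply, Matrix.sum_apply, Matrix.one_apply,
    outer, Matrix.vecMulVec_apply, Pi.star_apply, RCLike.star_def, map_sub, _root_.map_mul,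
    map_sum, map_inv₀, Complex.conj_natCast, smul_eq_mul, Complex.conj_conj, apply_ite,
    _root_.map_one, map_zero]
  congr 1
  congr 1
  · simp [eq_comm]
  · exact Finset.sum_congr rfl fun t _ => by ring

private lemma tr_mul_outer {γ : Type*} [Fintype γ] (A : Matrix γ γ ℂ) (y : γ → ℂ) :
    Matrix.trace (A * outer y) = star y ⬝ᵥ A.mulVec y := by
  simp only [Matrix.trace, Matrix.diag, Matrix.mul_apply, outer, Matrix.vecMulVec_apply,
    dotProduct, Matrix.mulVec, Pi.star_apply, RCLike.star_def, Finset.mul_sum]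
  refine Finset.sum_congr rfl fun q _ => Finset.sum_congr rfl fun p _ => by ring

private lemma T_eq_tr (hermρ : ∀ p q, conj (ρ p q) = ρ q p) :
    ∑ p, ∑ q, conj (ρ p q) * H p q = Matrix.trace (ρ * H) := by
  simp only [Matrix.trace, Matrix.diag, Matrix.mul_apply]
  rw [Finset.sum_comm]
  refine Finset.sum_congr rfl fun q _ => Finset.sum_congr rfl fun p _ => by rw [hermρ]

private lemma trace_rho_H (hON : ONFam (fun i => prodVec (α i) (β i)))
    (hρ : ρ = ((m * n - s : ℕ) : ℂ)⁻¹ • (1 - ∑ i, outer (prodVec (α i) (β i))))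
    (hH : H = (∑ i, outer (prodVec (α i) (β i))) -
      (((min m n : ℝ) * ε : ℝ) : ℂ) • outer Ψ) :
    Matrix.trace (ρ * H) = -(((min m n : ℝ) * ε : ℝ) : ℂ) * inC Ψ (ρ.mulVec Ψ) := by
  have hq : ∀ y : Fin m × Fin n → ℂ, star y ⬝ᵥ ρ.mulVec y
      = ((m * n - s : ℕ) : ℂ)⁻¹ * (inC y y - ∑ i, conj (inC (prodVec (α i) (β i)) y)
          * inC (prodVec (α i) (β i)) y) := by
    intro y
    rw [hρ]
    exact quad_form_formula _ _ _
  have hIC : inC Ψ (ρ.mulVec Ψ) = star Ψ ⬝ᵥ ρ.mulVec Ψ := by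
    simp [inC, dotProduct]
  rw [hH, Matrix.mul_sub, Matrix.trace_sub, Matrix.mul_smul, Matrix.trace_smul, Matrix.mul_sum,
    Matrix.trace_sum]
  have hzero : ∀ t : Fin s, Matrix.trace (ρ * outer (prodVec (α t) (β t))) = 0 := by
    intro t
    rw [tr_mul_outer, hq]
    have hterms : ∀ u : Fin s, conj (inC (prodVec (α u) (β u)) (prodVec (α t) (β t)))
        * inC (prodVec (α u) (β u)) (prodVec (α t) (β t))
        = if u = t then 1 else 0 := by
      intro u
      rw [hON u t]
      split <;> simp
    rw [Finset.sum_congr rfl fun u _ => hterms u,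
      Finset.sum_ite_eq' Finset.univ t (fun _ => (1:ℂ))]
    rw [hON t t, if_pos rfl]
    simp
  rw [Finset.sum_congr rfl fun t _ => hzero t, tr_mul_outer, ← hIC]
  simp [smul_eq_mul]

private lemma blockMap_add {ι : Type*}
    (S₁ S₂ : Matrix (Fin m) (Fin m) ℂ →ₗ[ℂ] Matrix (Fin n) (Fin n) ℂ)
    (ρ' : Matrix (ι × Fin m) (ι × Fin m) ℂ) :
    blockMap (S₁ + S₂) ρ' = blockMap S₁ ρ' + blockMap S₂ ρ' := by
  ext p q
  simp [blockMap]

private lemma blockMap_comp_T {ι : Type*}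
    (S₂ : Matrix (Fin m) (Fin m) ℂ →ₗ[ℂ] Matrix (Fin n) (Fin n) ℂ)
    (σM : Matrix (ι × Fin m) (ι × Fin m) ℂ) :
    blockMap (S₂ ∘ₗ Tmap (Fin m)) σM
    = blockMap S₂ (Matrix.of fun p q => σM (p.1, q.2) (q.1, p.2)) := by
  ext p q
  simp only [blockMap, Matrix.of_apply, LinearMap.comp_apply]
  congr 1

private lemma diag_quad (M : Matrix (Fin n × Fin n) (Fin n × Fin n) ℂ) :
    star (fun p : Fin n × Fin n => if p.1 = p.2 then (1:ℂ) else 0) ⬝ᵥ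
      M.mulVec (fun p : Fin n × Fin n => if p.1 = p.2 then (1:ℂ) else 0)
    = ∑ i, ∑ j, M (i,i) (j,j) := by
  rw [quad_expand, Fintype.sum_prod_type]
  refine Finset.sum_congr rfl fun i _ => ?_
  rw [show (∑ b, ∑ q, conj (if (i,b).1 = (i,b).2 then (1:ℂ) else 0) *
      (M (i,b) q * (if q.1 = q.2 then (1:ℂ) else 0))) =
      ∑ b, if i = b then (∑ q, M (i,b) q * (if q.1 = q.2 then (1:ℂ) else 0)) else 0 from
    Finset.sum_congr rfl fun b _ => by
      simp only [apply_ite conj, _root_.map_one, map_zero, ite_mul, one_mul, zero_mul,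
        Finset.mul_sum]
      split <;> simp]
  rw [Finset.sum_ite_eq Finset.univ i
    (fun b => ∑ q, M (i,b) q * (if q.1 = q.2 then (1:ℂ) else 0)), if_pos (Finset.mem_univ i)]
  rw [Fintype.sum_prod_type]
  refine Finset.sum_congr rfl fun j _ => ?_
  rw [show (∑ b', M (i,i) (j,b') * (if (j,b').1 = (j,b').2 then (1:ℂ) else 0))
      = ∑ b', if j = b' then M (i,i) (j,b') else 0 from
    Finset.sum_congr rfl fun b' _ => by simp only [mul_ite, mul_one, mul_zero]]
  rw [Finset.sum_ite_eq Finset.univ j (fun b' => M (i,i) (j,b')), if_pos (Finset.mem_univ j)]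

private lemma F_formula
    (hS : ∀ i j : Fin m, S (Matrix.single i j 1) = Matrix.of fun b b' => H (i, b) (j, b')) :
    star (fun p : Fin n × Fin n => if p.1 = p.2 then (1:ℂ) else 0) ⬝ᵥ
      (blockMap S (Matrix.of fun p q : Fin n × Fin m => conj (ρ (p.2, p.1) (q.2, q.1)))).mulVec
      (fun p : Fin n × Fin n => if p.1 = p.2 then (1:ℂ) else 0)
    = ∑ p, ∑ q, conj (ρ p q) * H p q := by
  rw [diag_quad]
  have h1 : ∀ i j : Fin n,
      (blockMap S (Matrix.of fun p q : Fin n × Fin m => conj (ρ (p.2, p.1) (q.2, q.1)))) (i,i) (j,j)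
      = ∑ k, ∑ l, conj (ρ (k, i) (l, j)) * H (k, i) (l, j) := by
    intro i j
    show S (Matrix.of fun b b' => (Matrix.of fun p q : Fin n × Fin m =>
        conj (ρ (p.2, p.1) (q.2, q.1))) (i, b) (j, b')) i j = _
    rw [S_apply hS]
    rfl
  rw [Finset.sum_congr rfl fun i _ => Finset.sum_congr rfl fun j _ => h1 i j]
  rw [show (∑ i : Fin n, ∑ j : Fin n, ∑ k : Fin m, ∑ l : Fin m, conj (ρ (k,i) (l,j)) * H (k,i) (l,j))
      = ∑ k : Fin m, ∑ i : Fin n, ∑ l : Fin m, ∑ j : Fin n, conj (ρ (k,i) (l,j)) * H (k,i) (l,j) from ?_]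
  · rw [Fintype.sum_prod_type]
    exact Finset.sum_congr rfl fun k _ => Finset.sum_congr rfl fun i _ => by
      rw [Fintype.sum_prod_type]
  · rw [show (∑ i : Fin n, ∑ j : Fin n, ∑ k : Fin m, ∑ l : Fin m, conj (ρ (k,i) (l,j)) * H (k,i) (l,j))
        = ∑ i : Fin n, ∑ k : Fin m, ∑ j : Fin n, ∑ l : Fin m, conj (ρ (k,i) (l,j)) * H (k,i) (l,j) from
      Finset.sum_congr rfl fun i _ => Finset.sum_comm]
    rw [Finset.sum_comm]
    exact Finset.sum_congr rfl fun k _ => Finset.sum_congr rfl fun i _ => Finset.sum_comm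

private lemma core_not_psd (hm : 0 < m) (hn : 0 < n) (hε : 0 < ε)
    (hON : ONFam (fun i => prodVec (α i) (β i)))
    (hρ : ρ = ((m * n - s : ℕ) : ℂ)⁻¹ • (1 - ∑ i, outer (prodVec (α i) (β i))))
    (hΨρ : 0 < (inC Ψ (ρ.mulVec Ψ)).re)
    (hH : H = (∑ i, outer (prodVec (α i) (β i))) -
      (((min m n : ℝ) * ε : ℝ) : ℂ) • outer Ψ)
    (hS : ∀ i j : Fin m, S (Matrix.single i j 1) = Matrix.of fun b b' => H (i, b) (j, b')) :
    ¬ (blockMap S (Matrix.of fun p q : Fin n × Fin m =>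
        conj (ρ (p.2, p.1) (q.2, q.1)))).PosSemidef := by
  intro hPSD
  have h0 := hPSD.dotProduct_mulVec_nonneg (fun p : Fin n × Fin n => if p.1 = p.2 then (1:ℂ) else 0)
  rw [F_formula hS, T_eq_tr (herm_rho hρ), trace_rho_H hON hρ hH] at h0
  have hre := (Complex.le_def.mp h0).1
  rw [Complex.zero_re] at hre
  have hμ : (0:ℝ) < (min m n : ℝ) * ε := by
    have : (0:ℝ) < (min m n : ℝ) := by exact_mod_cast lt_min hm hn
    positivity
  have hre2 : (-(((min m n : ℝ) * ε : ℝ) : ℂ) * inC Ψ (ρ.mulVec Ψ)).re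
      = -((min m n : ℝ) * ε) * (inC Ψ (ρ.mulVec Ψ)).re := by
    rw [show -(((min m n : ℝ) * ε : ℝ) : ℂ) = ((-((min m n : ℝ) * ε) : ℝ) : ℂ) from by
      push_cast; ring]
    rw [Complex.mul_re, Complex.ofReal_re, Complex.ofReal_im]
    ring
  rw [hre2] at hre
  nlinarith
end mainhelpers

/-- the map `S(|i⟩⟨j|) = ⟨i|H|j⟩` built from the UPB witness `H` is
positive, not completely positive, and indecomposable. -/
theorem upb_witness_map_positive_not_cp_indecomposable
    (m n s : ℕ) (hm : 0 < m) (hn : 0 < n)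
    (α : Fin s → Fin m → ℂ) (β : Fin s → Fin n → ℂ)
    (hUPB : IsUPB α β) (hs : s < m * n)
    (ρ : Matrix (Fin m × Fin n) (Fin m × Fin n) ℂ)
    (hρ : ρ = ((m * n - s : ℕ) : ℂ)⁻¹ • (1 - ∑ i, outer (prodVec (α i) (β i))))
    (ε : ℝ) (hε : 0 < ε)
    (hεmin : ∀ (a : Fin m → ℂ) (b : Fin n → ℂ), inC a a = 1 → inC b b = 1 →
      ε ≤ ∑ i, ‖inC a (α i)‖ ^ 2 * ‖inC b (β i)‖ ^ 2)
    (hεatt : ∃ (a : Fin m → ℂ) (b : Fin n → ℂ), inC a a = 1 ∧ inC b b = 1 ∧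
      ε = ∑ i, ‖inC a (α i)‖ ^ 2 * ‖inC b (β i)‖ ^ 2)
    (Ψ : Fin m × Fin n → ℂ) (hΨ : MaxEnt Ψ)
    (hΨρ : 0 < (inC Ψ (ρ.mulVec Ψ)).re)
    (H : Matrix (Fin m × Fin n) (Fin m × Fin n) ℂ)
    (hH : H = (∑ i, outer (prodVec (α i) (β i))) -
      (((min m n : ℝ) * ε : ℝ) : ℂ) • outer Ψ)
    (S : Matrix (Fin m) (Fin m) ℂ →ₗ[ℂ] Matrix (Fin n) (Fin n) ℂ)
    (hS : ∀ i j : Fin m,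
      S (Matrix.single i j 1) = Matrix.of fun b b' => H (i, b) (j, b')) :
    (∀ M : Matrix (Fin m) (Fin m) ℂ, M.PosSemidef → (S M).PosSemidef) ∧
    ¬ IsCP S ∧
    ¬ ∃ (S₁ S₂ : Matrix (Fin m) (Fin m) ℂ →ₗ[ℂ] Matrix (Fin n) (Fin n) ℂ),
        IsCP S₁ ∧ IsCP S₂ ∧ S = S₁ + S₂ ∘ₗ Tmap (Fin m) := by
  refine ⟨fun M hM => posdef_part1 hm hn hε hεmin hΨ hH hS M hM, ?_, ?_⟩
  · intro hCP
    have hσpsd : (Matrix.of fun p q : Fin n × Fin m =>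
        conj (ρ (p.2, p.1) (q.2, q.1))).PosSemidef := by
      rw [sigma_eq α β ρ hρ]
      exact psd_complement _ (onfam_g hUPB.1) _ (inv_nonneg.2 (Nat.cast_nonneg _))
    exact core_not_psd hm hn hε hUPB.1 hρ hΨρ hH hS (hCP n _ hσpsd)
  · rintro ⟨S₁, S₂, hCP1, hCP2, hSdec⟩
    have hσpsd : (Matrix.of fun p q : Fin n × Fin m =>
        conj (ρ (p.2, p.1) (q.2, q.1))).PosSemidef := by
      rw [sigma_eq α β ρ hρ]
      exact psd_complement _ (onfam_g hUPB.1) _ (inv_nonneg.2 (Nat.cast_nonneg _))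
    have hτpsd : (Matrix.of fun p q : Fin n × Fin m =>
        conj (ρ (q.2, p.1) (p.2, q.1))).PosSemidef := by
      rw [tau_eq α β ρ hρ]
      exact psd_complement _ (onfam_h hUPB.1) _ (inv_nonneg.2 (Nat.cast_nonneg _))
    have hdec : blockMap S (Matrix.of fun p q : Fin n × Fin m =>
        conj (ρ (p.2, p.1) (q.2, q.1)))
      = blockMap S₁ (Matrix.of fun p q : Fin n × Fin m => conj (ρ (p.2, p.1) (q.2, q.1)))
        + blockMap S₂ (Matrix.of fun p q : Fin n × Fin m => conj (ρ (q.2, p.1) (p.2, q.1))) := by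
      rw [hSdec, blockMap_add, blockMap_comp_T]
      rfl
    refine core_not_psd hm hn hε hUPB.1 hρ hΨρ hH hS ?_
    rw [hdec]
    exact Matrix.PosSemidef.add (hCP1 n _ hσpsd) (hCP2 n _ hτpsd)
end
end

section
/- There is no unextendible product basis in H_2 ⊗ H_n for any n ≥ 2: for every partial product basis S = {|α_i⟩⊗|β_i⟩} spanning a proper subspace of C² ⊗ C^n, the orthogonal complement of span(S) contains a product state. -/
open scoped BigOperators ComplexConjugate

noncomputable section

open Module Submodule

lemma inC_prod {ι κ : Type*} [Fintype ι] [Fintype κ] (a c : ι → ℂ) (b d : κ → ℂ) :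
    inC (prodVec a b) (prodVec c d) = inC a c * inC b d := by
  simp only [inC, prodVec, Fintype.sum_prod_type, Finset.sum_mul_sum, map_mul]
  exact Finset.sum_congr rfl fun i _ => Finset.sum_congr rfl fun j _ => by ring

def inCL {ι : Type*} [Fintype ι] (x : ι → ℂ) : (ι → ℂ) →ₗ[ℂ] ℂ where
  toFun y := inC x y
  map_add' y z := by
    simp only [inC, Pi.add_apply, mul_add]
    rw [Finset.sum_add_distrib]
  map_smul' t y := by
    simp only [inC, Pi.smul_apply, smul_eq_mul, RingHom.id_apply, Finset.mul_sum]
    exact Finset.sum_congr rfl fun i _ => by ring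

lemma inC_conj {ι : Type*} [Fintype ι] (x y : ι → ℂ) : inC x y = conj (inC y x) := by
  simp only [inC, map_sum, map_mul, Complex.conj_conj]
  exact Finset.sum_congr rfl fun i _ => by ring

lemma inC_smul_left {ι : Type*} [Fintype ι] (l : ℂ) (x y : ι → ℂ) :
    inC (l • x) y = conj l * inC x y := by
  simp only [inC, Pi.smul_apply, smul_eq_mul, map_mul, Finset.mul_sum]
  exact Finset.sum_congr rfl fun i _ => by ring

lemma ne2_iff {v : Fin 2 → ℂ} : v ≠ 0 ↔ (v 0 ≠ 0 ∨ v 1 ≠ 0) := by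
  constructor
  · intro hv
    by_contra h; push_neg at h
    exact hv (funext fun k => by fin_cases k <;> simp [h.1, h.2])
  · rintro (h | h) h0 <;> simp [h0] at h

lemma lem3 {u v w : Fin 2 → ℂ} (hw : w ≠ 0) (hv : v ≠ 0)
    (huw : inC u w = 0) (hvw : inC v w = 0) : ∃ l : ℂ, u = l • v := by
  have hu' : conj (u 0) * w 0 + conj (u 1) * w 1 = 0 := by
    simpa [inC, Fin.sum_univ_two] using huw
  have hv' : conj (v 0) * w 0 + conj (v 1) * w 1 = 0 := by
    simpa [inC, Fin.sum_univ_two] using hvw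
  have hdet : u 0 * v 1 = u 1 * v 0 := by
    have h : (conj (u 0) * conj (v 1) - conj (u 1) * conj (v 0)) = 0 := by
      rcases ne2_iff.mp hw with hk | hk
      · apply mul_right_cancel₀ hk
        linear_combination conj (v 1) * hu' - conj (u 1) * hv'
      · apply mul_right_cancel₀ hk
        linear_combination conj (u 0) * hv' - conj (v 0) * hu'
    have h2 := congrArg conj h
    simp only [map_sub, map_mul, Complex.conj_conj, map_zero] at h2
    linear_combination h2
  rcases ne2_iff.mp hv with hk | hk
  · refine ⟨u 0 / v 0, funext fun k => ?_⟩
    fin_cases k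
    · show u 0 = u 0 / v 0 * v 0; field_simp
    · show u 1 = u 0 / v 0 * v 1; field_simp; linear_combination -hdet
  · refine ⟨u 1 / v 1, funext fun k => ?_⟩
    fin_cases k
    · show u 0 = u 1 / v 1 * v 0; field_simp; linear_combination hdet
    · show u 1 = u 1 / v 1 * v 1; field_simp

lemma inner_eq_inC {n : ℕ} (x y : EuclideanSpace ℂ (Fin n)) : (inner ℂ x y : ℂ) = inC x y := by
  simp [inC, PiLp.inner_apply, RCLike.inner_apply]
  exact Finset.sum_congr rfl fun i _ => mul_comm _ _

lemma exists_orth {n : ℕ} (W S : Submodule ℂ (EuclideanSpace ℂ (Fin n)))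
    (h : finrank ℂ S < finrank ℂ W) : ∃ b ∈ W, b ≠ 0 ∧ b ∈ Sᗮ := by
  have h1 := Submodule.finrank_sup_add_finrank_inf_eq W Sᗮ
  have h2 := Submodule.finrank_add_finrank_orthogonal S
  have h3 : finrank ℂ ↥(W ⊔ Sᗮ) ≤ finrank ℂ (EuclideanSpace ℂ (Fin n)) :=
    Submodule.finrank_le _
  have hpos : 0 < finrank ℂ ↥(W ⊓ Sᗮ) := by omega
  have hne : (W ⊓ Sᗮ) ≠ ⊥ := by
    intro hb; rw [hb, finrank_bot] at hpos; omega
  obtain ⟨b, hb, hb0⟩ := (Submodule.ne_bot_iff _).mp hne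
  exact ⟨b, hb.1, hb0, hb.2⟩

-- orthogonality to a span from orthogonality to generators
lemma inner_span_zero {n : ℕ} (x : EuclideanSpace ℂ (Fin n)) (s : Set (EuclideanSpace ℂ (Fin n)))
    (hx : ∀ y ∈ s, (inner ℂ x y : ℂ) = 0) {b : EuclideanSpace ℂ (Fin n)}
    (hb : b ∈ Submodule.span ℂ s) : (inner ℂ x b : ℂ) = 0 := by
  have hle : Submodule.span ℂ s ≤ (ℂ ∙ x)ᗮ := by
    rw [Submodule.span_le]
    intro y hy
    rw [SetLike.mem_coe, Submodule.mem_orthogonal]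
    intro u hu
    obtain ⟨t, rfl⟩ := Submodule.mem_span_singleton.mp hu
    rw [inner_smul_left, hx y hy, mul_zero]
  exact (Submodule.mem_orthogonal _ _).mp (hle hb) x (Submodule.mem_span_singleton_self x)

lemma key {n s : ℕ} [DecidableEq (EuclideanSpace ℂ (Fin n))] (α : Fin s → Fin 2 → ℂ) (B : Fin s → EuclideanSpace ℂ (Fin n))
    (hα : ∀ i, α i ≠ 0)
    (hOrth : ∀ i j, i ≠ j → inC (α i) (α j) * (inner ℂ (B i) (B j) : ℂ) = 0) :
    ∀ N : ℕ, ∀ T : Finset (Fin s), T.card ≤ N →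
      T.card < 2 * finrank ℂ (Submodule.span ℂ (↑(T.image B) : Set (EuclideanSpace ℂ (Fin n)))) →
      ∃ a : Fin 2 → ℂ, a ≠ 0 ∧ ∃ b ∈ Submodule.span ℂ (↑(T.image B) : Set (EuclideanSpace ℂ (Fin n))),
        b ≠ 0 ∧ ∀ i ∈ T, inC (α i) a = 0 ∨ (inner ℂ (B i) b : ℂ) = 0 := by
  classical
  intro N
  induction N with
  | zero =>
    intro T hTN hlt
    rw [Nat.le_zero, Finset.card_eq_zero] at hTN
    subst hTN
    rw [Finset.image_empty, Finset.coe_empty, Submodule.span_empty] at hlt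
    simp [finrank_bot] at hlt
  | succ N ih =>
    intro T hTN hlt
    -- T is nonempty
    have hTne : T.Nonempty := by
      rcases T.eq_empty_or_nonempty with h | h
      · subst h
        rw [Finset.image_empty, Finset.coe_empty, Submodule.span_empty] at hlt
        simp [finrank_bot] at hlt
      · exact h
    obtain ⟨i₀, hi₀⟩ := hTne
    set c : Fin 2 → ℂ := ![-(conj (α i₀ 1)), conj (α i₀ 0)] with hcdef
    have hc0 : inC (α i₀) c = 0 := by
      simp [inC, Fin.sum_univ_two, hcdef]
      ring
    have hc0' : inC c (α i₀) = 0 := by rw [inC_conj, hc0, map_zero]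
    have hcne : c ≠ 0 := by
      rcases ne2_iff.mp (hα i₀) with h | h
      · exact ne2_iff.mpr (Or.inr (by simpa [hcdef] using h))
      · exact ne2_iff.mpr (Or.inl (by simpa [hcdef] using h))
    set P : Fin s → Prop := fun j => inC (α j) c = 0 with hPdef
    set Q : Fin s → Prop := fun j => inC (α j) (α i₀) = 0 with hQdef
    set K := T.filter P with hK
    set Tn := T.filter (fun j => ¬ P j) with hTn
    set T1 := Tn.filter Q with hT1
    set T0 := Tn.filter (fun j => ¬ Q j) with hT0
    set S2 := T.filter (fun j => ¬ Q j) with hS2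
    set W := Submodule.span ℂ (↑(T.image B) : Set (EuclideanSpace ℂ (Fin n))) with hW
    set r := finrank ℂ W with hr
    -- key orthogonality facts
    have hKorth : ∀ i ∈ K, ∀ j ∈ T0, (inner ℂ (B i) (B j) : ℂ) = 0 := by
      intro i hiK j hjT0
      have hiP : P i := (Finset.mem_filter.mp hiK).2
      have hjP : ¬ P j := (Finset.mem_filter.mp (Finset.mem_filter.mp hjT0).1).2
      have hjQ : ¬ Q j := (Finset.mem_filter.mp hjT0).2
      have hij : i ≠ j := fun h => hjP (h ▸ hiP)
      have hane : inC (α i) (α j) ≠ 0 := by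
        intro h0
        obtain ⟨l, hl⟩ := lem3 hcne (hα i₀) hiP hc0
        have hlne : l ≠ 0 := by rintro rfl; exact hα i (by simpa using hl)
        rw [hl, inC_smul_left] at h0
        have := (mul_eq_zero.mp h0).resolve_left (by simpa using hlne)
        exact hjQ (by simp only [hQdef]; rw [inC_conj, this, map_zero])
      have := hOrth i j hij
      exact (mul_eq_zero.mp this).resolve_left hane
    have hT1orth : ∀ i ∈ T1, ∀ j ∈ T0, (inner ℂ (B i) (B j) : ℂ) = 0 := by
      intro i hiT1 j hjT0
      have hiQ : Q i := (Finset.mem_filter.mp hiT1).2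
      have hjQ : ¬ Q j := (Finset.mem_filter.mp hjT0).2
      have hjP : ¬ P j := (Finset.mem_filter.mp (Finset.mem_filter.mp hjT0).1).2
      have hij : i ≠ j := fun h => hjQ (h ▸ hiQ)
      have hane : inC (α i) (α j) ≠ 0 := by
        intro h0
        obtain ⟨l, hl⟩ := lem3 (hα i₀) hcne hiQ hc0'
        have hlne : l ≠ 0 := by rintro rfl; exact hα i (by simpa using hl)
        rw [hl, inC_smul_left] at h0
        have := (mul_eq_zero.mp h0).resolve_left (by simpa using hlne)
        exact hjP (by simp only [hPdef]; rw [inC_conj, this, map_zero])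
      have := hOrth i j hij
      exact (mul_eq_zero.mp this).resolve_left hane
    -- case split on the two "option" branches
    by_cases hopt1 : finrank ℂ (Submodule.span ℂ (↑(Tn.image B) : Set (EuclideanSpace ℂ (Fin n)))) < r
    · -- a := c works
      obtain ⟨b, hbW, hb0, hborth⟩ := exists_orth W _ hopt1
      refine ⟨c, hcne, b, hbW, hb0, ?_⟩
      intro i hiT
      by_cases hiP : P i
      · exact Or.inl hiP
      · refine Or.inr ?_
        have hiTn : i ∈ Tn := Finset.mem_filter.mpr ⟨hiT, hiP⟩
        have hBi : B i ∈ Submodule.span ℂ (↑(Tn.image B) : Set (EuclideanSpace ℂ (Fin n))) :=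
          Submodule.subset_span (by simp; exact ⟨i, hiTn, rfl⟩)
        exact (Submodule.mem_orthogonal _ _).mp hborth (B i) hBi
    · by_cases hopt2 : finrank ℂ (Submodule.span ℂ (↑(S2.image B) : Set (EuclideanSpace ℂ (Fin n)))) < r
      · -- a := α i₀ works
        obtain ⟨b, hbW, hb0, hborth⟩ := exists_orth W _ hopt2
        refine ⟨α i₀, hα i₀, b, hbW, hb0, ?_⟩
        intro i hiT
        by_cases hiQ : Q i
        · exact Or.inl hiQ
        · refine Or.inr ?_
          have hiS2 : i ∈ S2 := Finset.mem_filter.mpr ⟨hiT, hiQ⟩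
          have hBi : B i ∈ Submodule.span ℂ (↑(S2.image B) : Set (EuclideanSpace ℂ (Fin n))) :=
            Submodule.subset_span (by simp; exact ⟨i, hiS2, rfl⟩)
          exact (Submodule.mem_orthogonal _ _).mp hborth (B i) hBi
      · -- recursion on T0
        push_neg at hopt1 hopt2
        set r0 := finrank ℂ (Submodule.span ℂ (↑(T0.image B) : Set (EuclideanSpace ℂ (Fin n)))) with hr0
        -- subadditivity bounds
        have hbound : ∀ (A C : Finset (Fin s)), A ⊆ C ∪ T0 →
            finrank ℂ (Submodule.span ℂ (↑(A.image B) : Set (EuclideanSpace ℂ (Fin n)))) ≤ C.card + r0 := by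
          intro A C hsub
          have h1 : Submodule.span ℂ (↑(A.image B) : Set (EuclideanSpace ℂ (Fin n))) ≤
              Submodule.span ℂ (↑(C.image B) : Set (EuclideanSpace ℂ (Fin n))) ⊔
              Submodule.span ℂ (↑(T0.image B) : Set (EuclideanSpace ℂ (Fin n))) := by
            rw [← Submodule.span_union, ← Finset.coe_union, ← Finset.image_union]
            exact Submodule.span_mono (by exact_mod_cast Finset.coe_subset.mpr (Finset.image_subset_image hsub))
          calc finrank ℂ (Submodule.span ℂ (↑(A.image B) : Set (EuclideanSpace ℂ (Fin n))))
              ≤ finrank ℂ ↥(Submodule.span ℂ (↑(C.image B) : Set (EuclideanSpace ℂ (Fin n))) ⊔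
                Submodule.span ℂ (↑(T0.image B) : Set (EuclideanSpace ℂ (Fin n)))) :=
                Submodule.finrank_mono h1
            _ ≤ finrank ℂ (Submodule.span ℂ (↑(C.image B) : Set (EuclideanSpace ℂ (Fin n)))) + r0 := by
                have := Submodule.finrank_sup_add_finrank_inf_eq
                  (Submodule.span ℂ (↑(C.image B) : Set (EuclideanSpace ℂ (Fin n))))
                  (Submodule.span ℂ (↑(T0.image B) : Set (EuclideanSpace ℂ (Fin n))))
                omega
            _ ≤ C.card + r0 := by
                have h2 : finrank ℂ (Submodule.span ℂ (↑(C.image B) : Set (EuclideanSpace ℂ (Fin n)))) ≤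
                    (C.image B).card := finrank_span_finset_le_card _
                have h3 := Finset.card_image_le (s := C) (f := B)
                omega
        have hb1 : r ≤ T1.card + r0 := le_trans hopt1 (hbound Tn T1 (by
          intro x hx
          rcases Classical.em (Q x) with h | h
          · exact Finset.mem_union_left _ (Finset.mem_filter.mpr ⟨hx, h⟩)
          · exact Finset.mem_union_right _ (Finset.mem_filter.mpr ⟨hx, h⟩)))
        have hb2 : r ≤ K.card + r0 := le_trans hopt2 (hbound S2 K (by
          intro x hx
          have hxT : x ∈ T := (Finset.mem_filter.mp hx).1
          have hxQ : ¬ Q x := (Finset.mem_filter.mp hx).2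
          rcases Classical.em (P x) with h | h
          · exact Finset.mem_union_left _ (Finset.mem_filter.mpr ⟨hxT, h⟩)
          · exact Finset.mem_union_right _ (Finset.mem_filter.mpr ⟨Finset.mem_filter.mpr ⟨hxT, h⟩, hxQ⟩)))
        -- cardinality bookkeeping
        have hcards1 : K.card + Tn.card = T.card := Finset.card_filter_add_card_filter_not _
        have hcards2 : T1.card + T0.card = Tn.card := Finset.card_filter_add_card_filter_not _
        have hT0lt : T0.card < 2 * r0 := by omega
        -- T0 is strictly smaller than T
        have hi₀K : i₀ ∈ K := Finset.mem_filter.mpr ⟨hi₀, hc0⟩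
        have hi₀T0 : i₀ ∉ T0 := fun h => (Finset.mem_filter.mp (Finset.mem_filter.mp h).1).2 hc0
        have hT0T : T0 ⊆ T := (Finset.filter_subset _ _).trans (Finset.filter_subset _ _)
        have hT0ltcard : T0.card < T.card := Finset.card_lt_card
          (Finset.ssubset_iff_of_subset hT0T |>.mpr ⟨i₀, hi₀, hi₀T0⟩)
        obtain ⟨a, ha, b, hbmem, hb0, hcond⟩ := ih T0 (by omega) hT0lt
        refine ⟨a, ha, b, Submodule.span_mono (by exact_mod_cast Finset.coe_subset.mpr (Finset.image_subset_image hT0T)) hbmem, hb0, ?_⟩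
        intro i hiT
        by_cases hiT0 : i ∈ T0
        · exact hcond i hiT0
        · -- i ∈ K ∪ T1, so B i ⊥ span T0
          refine Or.inr ?_
          have horthall : ∀ y ∈ (↑(T0.image B) : Set (EuclideanSpace ℂ (Fin n))), (inner ℂ (B i) y : ℂ) = 0 := by
            intro y hy
            simp only [Finset.coe_image, Set.mem_image, Finset.mem_coe] at hy
            obtain ⟨j, hjT0, rfl⟩ := hy
            rcases Classical.em (P i) with h | h
            · exact hKorth i (Finset.mem_filter.mpr ⟨hiT, h⟩) j hjT0
            · have hiQ : Q i := by
                by_contra hq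
                exact hiT0 (Finset.mem_filter.mpr ⟨Finset.mem_filter.mpr ⟨hiT, h⟩, hq⟩)
              exact hT1orth i (Finset.mem_filter.mpr ⟨Finset.mem_filter.mpr ⟨hiT, h⟩, hiQ⟩) j hjT0
          exact inner_span_zero (B i) _ horthall hbmem


/-- there is no UPB in `C² ⊗ Cⁿ` (`n ≥ 2`): every partial product
basis spanning a proper subspace can be extended, i.e. some nonzero product
vector is orthogonal to all its members. -/
theorem no_upb_in_two_times_n
    (n : ℕ) (hn : 2 ≤ n) (s : ℕ)
    (α : Fin s → Fin 2 → ℂ) (β : Fin s → Fin n → ℂ)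
    (hON : ONFam (fun i => prodVec (α i) (β i)))
    (hproper : Submodule.span ℂ (Set.range fun i => prodVec (α i) (β i)) ≠ ⊤) :
    ∃ (a : Fin 2 → ℂ) (b : Fin n → ℂ), a ≠ 0 ∧ b ≠ 0 ∧
      ∀ i, inC (prodVec (α i) (β i)) (prodVec a b) = 0 := by
  classical
  haveI : DecidableEq (EuclideanSpace ℂ (Fin n)) := Classical.decEq _
  set V : Fin s → (Fin 2 × Fin n → ℂ) := fun i => prodVec (α i) (β i) with hV
  -- each α i is nonzero
  have hα : ∀ i, α i ≠ 0 := by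
    intro i h0
    have h := hON i i
    rw [if_pos rfl] at h
    have h2 : inC (α i) (α i) * inC (β i) (β i) = 1 := by
      rw [← inC_prod]; exact h
    rw [h0] at h2
    simp [inC] at h2
  -- the product family is linearly independent
  have hLI : LinearIndependent ℂ V := by
    rw [Fintype.linearIndependent_iff]
    intro g hg j
    have h := congrArg (inCL (V j)) hg
    rw [map_sum, map_zero] at h
    have h2 : ∀ i, inCL (V j) (g i • V i) = g i * (if j = i then 1 else 0) := by
      intro i
      rw [map_smul]
      have : inCL (V j) (V i) = inC (V j) (V i) := rfl
      rw [smul_eq_mul, this, hON j i]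
    rw [Finset.sum_congr rfl (fun i _ => h2 i)] at h
    simpa using h
  have hfrank : finrank ℂ (Fin 2 × Fin n → ℂ) = 2 * n := by
    rw [Module.finrank_pi]
    simp [Fintype.card_prod]
  have hsle : s ≤ 2 * n := by
    have := hLI.fintype_card_le_finrank
    rwa [Fintype.card_fin, hfrank] at this
  have hslt : s < 2 * n := by
    rcases lt_or_eq_of_le hsle with h | h
    · exact h
    · exfalso
      haveI : Nonempty (Fin s) := by
        rw [← Fin.pos_iff_nonempty]; omega
      have hcd : Fintype.card (Fin s) = finrank ℂ (Fin 2 × Fin n → ℂ) := by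
        rw [Fintype.card_fin, hfrank, h]
      apply hproper
      have hbs := (basisOfLinearIndependentOfCardEqFinrank hLI hcd).span_eq
      rwa [coe_basisOfLinearIndependentOfCardEqFinrank] at hbs
  -- move β into Euclidean space
  set B' : Fin s → EuclideanSpace ℂ (Fin n) := fun i => WithLp.toLp 2 (β i) with hB'
  have hOrth : ∀ i j, i ≠ j → inC (α i) (α j) * (inner ℂ (B' i) (B' j) : ℂ) = 0 := by
    intro i j hij
    rw [inner_eq_inC]
    have h := hON i j
    rw [if_neg hij] at h
    have h2 : inC (α i) (α j) * inC (β i) (β j) = 0 := by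
      rw [← inC_prod]; exact h
    exact h2
  by_cases hsp : Submodule.span ℂ (Set.range B') = ⊤
  · -- β's span everything: use the key lemma
    have hcoe : (↑(Finset.univ.image B') : Set (EuclideanSpace ℂ (Fin n))) = Set.range B' := by
      rw [Finset.coe_image, Finset.coe_univ, Set.image_univ]
    have hfr : finrank ℂ (Submodule.span ℂ
        (↑(Finset.univ.image B') : Set (EuclideanSpace ℂ (Fin n)))) = n := by
      rw [hcoe, hsp, finrank_top, finrank_euclideanSpace, Fintype.card_fin]
    obtain ⟨a, ha, b, hbmem, hb0, hcond⟩ :=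
      key α B' hα hOrth s Finset.univ (by simp) (by rw [hfr]; simpa using hslt)
    refine ⟨a, b, ha, (by simpa using hb0), fun i => ?_⟩
    rw [inC_prod]
    rcases hcond i (Finset.mem_univ i) with h | h
    · rw [h, zero_mul]
    · have h2 : inC (β i) b = 0 := by rw [inner_eq_inC] at h; exact h
      rw [h2, mul_zero]
  · -- β's don't span: take b in the orthogonal complement
    have hne : (Submodule.span ℂ (Set.range B'))ᗮ ≠ ⊥ := by
      intro h
      exact hsp (Submodule.orthogonal_eq_bot_iff.mp h)
    obtain ⟨b, hb, hb0⟩ := (Submodule.ne_bot_iff _).mp hne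
    refine ⟨fun _ => 1, b, ?_, (by simpa using hb0), fun i => ?_⟩
    · intro h
      have := congrFun h 0
      simp at this
    · rw [inC_prod]
      have h2 : (inner ℂ (B' i) b : ℂ) = 0 :=
        (Submodule.mem_orthogonal _ _).mp hb (B' i)
          (Submodule.subset_span (Set.mem_range_self i))
      rw [inner_eq_inC] at h2
      rw [show inC (β i) b = 0 from h2, mul_zero]
end
end
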